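/- Let V = Σ_{i=0}^{d} n_i·Sym^{2i}(ℂ²) and W = Σ_{i=1}^{d} m_i·Sym^{2i−1}(ℂ²) be two finite-dimensional representations of SU(2). Then 2·[dim(V⊗V)[0] + dim(W⊗W)[0] − 2·dim(V⊗W)[1]] ≥ m_1² + m_2² + ⋯ + m_d². -/

import Mathlib

/-- `wtDim ℓ k` is the dimension of the `k`-weight space (for the standard maximal torus
`S¹ ⊂ SU(2)`, acting by `z ↦ z^k`) of the representation `⊕ᵢ ℓ i · Sym^i(ℂ²)` of `SU(2)`
encoded by its multiplicity function `ℓ : ℕ → ℕ`: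
`dim E[k] = Σ_{i ≥ |k|, i ≡ k (mod 2)} ℓ i`. -/
noncomputable def wtDim (ℓ : ℕ → ℕ) (k : ℤ) : ℕ :=
  ∑ᶠ i : ℕ, if k.natAbs ≤ i ∧ k % 2 = (i : ℤ) % 2 then ℓ i else 0

/-- `tensorWtDim ℓ₁ ℓ₂ k` is the dimension of the `k`-weight space of the tensor product
of the `SU(2)`-representations encoded by `ℓ₁` and `ℓ₂`:
`dim (E⊗F)[k] = Σ_{j ∈ ℤ} dim E[j] · dim F[k-j]`. -/
noncomputable def tensorWtDim (ℓ₁ ℓ₂ : ℕ → ℕ) (k : ℤ) : ℕ :=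
  ∑ᶠ j : ℤ, wtDim ℓ₁ j * wtDim ℓ₂ (k - j)

/-- Multiplicity function of `V = Σ_{i=0}^{d} n_i · Sym^{2i}(ℂ²)`
(trivial central character). -/
def evenRep (d : ℕ) (n : ℕ → ℕ) : ℕ → ℕ :=
  fun j => if j % 2 = 0 ∧ j / 2 ≤ d then n (j / 2) else 0

/-- Multiplicity function of `W = Σ_{i=1}^{d} m_i · Sym^{2i-1}(ℂ²)`
(non-trivial central character). -/
def oddRep (d : ℕ) (m : ℕ → ℕ) : ℕ → ℕ :=
  fun j => if j % 2 = 1 ∧ (j + 1) / 2 ≤ d then m ((j + 1) / 2) else 0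

lemma wtDim_eq_sum (ℓ : ℕ → ℕ) (k : ℤ) (N : ℕ) (h : ∀ i, N ≤ i → ℓ i = 0) :
    wtDim ℓ k = ∑ i ∈ Finset.range N, if k.natAbs ≤ i ∧ k % 2 = (i : ℤ) % 2 then ℓ i else 0 := by
  apply finsum_eq_finset_sum_of_support_subset
  intro i hi
  simp only [Function.mem_support, ne_eq] at hi
  simp only [Finset.coe_range, Set.mem_Iio]
  by_contra hN
  push_neg at hN
  rw [h i hN] at hi
  simp at hi
lemma wtDim_eq_zero (ℓ : ℕ → ℕ) (k : ℤ)
    (h : ∀ i, k.natAbs ≤ i → k % 2 = (i : ℤ) % 2 → ℓ i = 0) : wtDim ℓ k = 0 := by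
  apply finsum_eq_zero_of_forall_eq_zero
  intro i
  split_ifs with hc
  · exact h i hc.1 hc.2
  · rfl
lemma evenRep_bound (d : ℕ) (n : ℕ → ℕ) : ∀ i, 2*d+1 ≤ i → evenRep d n i = 0 := by
  intro i hi
  unfold evenRep
  split_ifs with hc
  · exfalso; obtain ⟨h1, h2⟩ := hc; omega
  · rfl
lemma oddRep_bound (d : ℕ) (m : ℕ → ℕ) : ∀ i, 2*d ≤ i → oddRep d m i = 0 := by
  intro i hi
  unfold oddRep
  split_ifs with hc
  · exfalso; obtain ⟨h1, h2⟩ := hc; omega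
  · rfl
lemma wtDim_even_odd (d : ℕ) (n : ℕ → ℕ) (k : ℤ) (hk : k % 2 = 1) :
    wtDim (evenRep d n) k = 0 := by
  apply wtDim_eq_zero
  intro i _ hp
  unfold evenRep
  split_ifs with hc
  · exfalso; omega
  · rfl
lemma wtDim_odd_even (d : ℕ) (m : ℕ → ℕ) (k : ℤ) (hk : k % 2 = 0) :
    wtDim (oddRep d m) k = 0 := by
  apply wtDim_eq_zero
  intro i _ hp
  unfold oddRep
  split_ifs with hc
  · exfalso; omega
  · rfl
lemma A_eq (d : ℕ) (n : ℕ → ℕ) (t : ℤ) :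
    wtDim (evenRep d n) (2*t) = ∑ s ∈ Finset.Icc t.natAbs d, n s := by
  rw [wtDim_eq_sum _ _ (2*d+2) (fun i hi => evenRep_bound d n i (by omega))]
  rw [show ∑ s ∈ Finset.Icc t.natAbs d, n s
      = ∑ i ∈ (Finset.Icc t.natAbs d).image (2 * ·),
          if (2*t).natAbs ≤ i ∧ (2*t) % 2 = (i : ℤ) % 2 then evenRep d n i else 0 by
    rw [Finset.sum_image (by intro a _ b _ h; beta_reduce at h; omega)]
    apply Finset.sum_congr rfl
    intro s hs
    simp only [Finset.mem_Icc] at hs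
    rw [if_pos ⟨by omega, by omega⟩]
    unfold evenRep
    rw [if_pos ⟨by omega, by omega⟩]
    congr 1
    omega]
  refine (Finset.sum_subset ?_ ?_).symm
  · intro i hi
    simp only [Finset.mem_image, Finset.mem_Icc] at hi
    obtain ⟨s, hs, rfl⟩ := hi
    simp only [Finset.mem_range]
    omega
  · intro i _ hi
    simp only [Finset.mem_image, Finset.mem_Icc] at hi
    split_ifs with hc
    · obtain ⟨h1, h2⟩ := hc
      unfold evenRep
      split_ifs with hc2
      · exfalso
        exact hi ⟨i / 2, ⟨by omega, hc2.2⟩, by omega⟩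
      · rfl
    · rfl
lemma B_eq (d : ℕ) (m : ℕ → ℕ) (t : ℤ) :
    wtDim (oddRep d m) (2*t-1) = ∑ s ∈ Finset.Icc (((2*t-1).natAbs + 1)/2) d, m s := by
  rw [wtDim_eq_sum _ _ (2*d) (fun i hi => oddRep_bound d m i hi)]
  rw [show ∑ s ∈ Finset.Icc (((2*t-1).natAbs + 1)/2) d, m s
      = ∑ i ∈ (Finset.Icc (((2*t-1).natAbs + 1)/2) d).image (fun s => 2 * s - 1),
          if (2*t-1).natAbs ≤ i ∧ (2*t-1) % 2 = (i : ℤ) % 2 then oddRep d m i else 0 by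
    rw [Finset.sum_image (by
      intro a ha b hb h
      simp only [Finset.mem_coe, Finset.mem_Icc] at ha hb
      beta_reduce at h
      omega)]
    apply Finset.sum_congr rfl
    intro s hs
    simp only [Finset.mem_Icc] at hs
    rw [if_pos ⟨by omega, by omega⟩]
    unfold oddRep
    rw [if_pos ⟨by omega, by omega⟩]
    congr 1
    omega]
  refine (Finset.sum_subset ?_ ?_).symm
  · intro i hi
    simp only [Finset.mem_image, Finset.mem_Icc] at hi
    obtain ⟨s, hs, rfl⟩ := hi
    simp only [Finset.mem_range]
    omega
  · intro i _ hi
    simp only [Finset.mem_image, Finset.mem_Icc] at hi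
    split_ifs with hc
    · obtain ⟨h1, h2⟩ := hc
      unfold oddRep
      split_ifs with hc2
      · exfalso
        exact hi ⟨(i+1)/2, ⟨by omega, hc2.2⟩, by omega⟩
      · rfl
    · rfl
lemma wtDim_evenRep_bound (d : ℕ) (n : ℕ → ℕ) (k : ℤ) (hk : 2*d+1 ≤ k.natAbs) :
    wtDim (evenRep d n) k = 0 :=
  wtDim_eq_zero _ _ (fun i hi _ => evenRep_bound d n i (le_trans hk hi))
lemma wtDim_oddRep_bound (d : ℕ) (m : ℕ → ℕ) (k : ℤ) (hk : 2*d ≤ k.natAbs) :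
    wtDim (oddRep d m) k = 0 :=
  wtDim_eq_zero _ _ (fun i hi _ => oddRep_bound d m i (le_trans hk hi))
lemma tensor_eq_sum (ℓ₁ ℓ₂ : ℕ → ℕ) (k : ℤ) (d : ℕ)
    (hb : ∀ j : ℤ, 2*d+1 ≤ j.natAbs → wtDim ℓ₁ j = 0) :
    tensorWtDim ℓ₁ ℓ₂ k
      = ∑ j ∈ Finset.Icc (-(2*(d:ℤ)+1)) (2*(d:ℤ)+1), wtDim ℓ₁ j * wtDim ℓ₂ (k - j) := by
  apply finsum_eq_finset_sum_of_support_subset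
  intro j hj
  simp only [Function.mem_support, ne_eq] at hj
  simp only [Finset.coe_Icc, Set.mem_Icc]
  by_contra hN
  have : 2*d+1 ≤ j.natAbs := by omega
  rw [hb j this, zero_mul] at hj
  exact hj rfl
lemma tensor_even_even (d : ℕ) (n : ℕ → ℕ) :
    tensorWtDim (evenRep d n) (evenRep d n) 0
      = ∑ t ∈ Finset.Icc (-(d:ℤ)) (d:ℤ), (∑ s ∈ Finset.Icc t.natAbs d, n s) ^ 2 := by
  rw [tensor_eq_sum _ _ _ d (fun j hj => wtDim_evenRep_bound d n j hj)]
  rw [show ∑ t ∈ Finset.Icc (-(d:ℤ)) (d:ℤ), (∑ s ∈ Finset.Icc t.natAbs d, n s) ^ 2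
      = ∑ j ∈ (Finset.Icc (-(d:ℤ)) (d:ℤ)).image (fun t => 2*t),
          wtDim (evenRep d n) j * wtDim (evenRep d n) (0 - j) by
    rw [Finset.sum_image (by intro a _ b _ h; beta_reduce at h; omega)]
    apply Finset.sum_congr rfl
    intro t _
    rw [show (0 : ℤ) - 2*t = 2*(-t) by ring, A_eq, A_eq, Int.natAbs_neg, sq]]
  refine (Finset.sum_subset ?_ ?_).symm
  · intro j hj
    simp only [Finset.mem_image, Finset.mem_Icc] at hj
    obtain ⟨t, ht, rfl⟩ := hj
    simp only [Finset.mem_Icc]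
    omega
  · intro j hjS hj
    simp only [Finset.mem_image, Finset.mem_Icc] at hj
    simp only [Finset.mem_Icc] at hjS
    rcases Int.even_or_odd j with he | ho
    · exfalso
      obtain ⟨t, rfl⟩ := he
      exact hj ⟨t, by omega, by ring⟩
    · obtain ⟨t, rfl⟩ := ho
      rw [wtDim_even_odd d n _ (by omega), zero_mul]
lemma tensor_odd_odd (d : ℕ) (m : ℕ → ℕ) :
    tensorWtDim (oddRep d m) (oddRep d m) 0
      = ∑ t ∈ Finset.Icc (-(d:ℤ)) ((d:ℤ)+1),
          (∑ s ∈ Finset.Icc (((2*t-1).natAbs + 1)/2) d, m s) ^ 2 := by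
  rw [tensor_eq_sum _ _ _ d (fun j hj => wtDim_oddRep_bound d m j (by omega))]
  rw [show ∑ t ∈ Finset.Icc (-(d:ℤ)) ((d:ℤ)+1),
          (∑ s ∈ Finset.Icc (((2*t-1).natAbs + 1)/2) d, m s) ^ 2
      = ∑ j ∈ (Finset.Icc (-(d:ℤ)) ((d:ℤ)+1)).image (fun t => 2*t-1),
          wtDim (oddRep d m) j * wtDim (oddRep d m) (0 - j) by
    rw [Finset.sum_image (by intro a _ b _ h; beta_reduce at h; omega)]
    apply Finset.sum_congr rfl
    intro t _
    rw [show (0 : ℤ) - (2*t-1) = 2*(1-t)-1 by ring, B_eq, B_eq,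
      show 2*(1-t)-1 = -(2*t-1) by ring, Int.natAbs_neg, sq]]
  refine (Finset.sum_subset ?_ ?_).symm
  · intro j hj
    simp only [Finset.mem_image, Finset.mem_Icc] at hj
    obtain ⟨t, ht, rfl⟩ := hj
    simp only [Finset.mem_Icc]
    omega
  · intro j hjS hj
    simp only [Finset.mem_image, Finset.mem_Icc] at hj
    simp only [Finset.mem_Icc] at hjS
    rcases Int.even_or_odd j with he | ho
    · obtain ⟨t, rfl⟩ := he
      rw [wtDim_odd_even d m _ (by omega), zero_mul]
    · exfalso
      obtain ⟨t, rfl⟩ := ho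
      exact hj ⟨t+1, by omega, by ring⟩
lemma tensor_even_odd (d : ℕ) (n m : ℕ → ℕ) :
    tensorWtDim (evenRep d n) (oddRep d m) 1
      = ∑ t ∈ Finset.Icc (-(d:ℤ)) (d:ℤ),
          (∑ s ∈ Finset.Icc t.natAbs d, n s)
            * (∑ s ∈ Finset.Icc (((2*t-1).natAbs + 1)/2) d, m s) := by
  rw [tensor_eq_sum _ _ _ d (fun j hj => wtDim_evenRep_bound d n j hj)]
  rw [show ∑ t ∈ Finset.Icc (-(d:ℤ)) (d:ℤ),
          (∑ s ∈ Finset.Icc t.natAbs d, n s)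
            * (∑ s ∈ Finset.Icc (((2*t-1).natAbs + 1)/2) d, m s)
      = ∑ j ∈ (Finset.Icc (-(d:ℤ)) (d:ℤ)).image (fun t => 2*t),
          wtDim (evenRep d n) j * wtDim (oddRep d m) (1 - j) by
    rw [Finset.sum_image (by intro a _ b _ h; beta_reduce at h; omega)]
    apply Finset.sum_congr rfl
    intro t _
    rw [show (1 : ℤ) - 2*t = 2*(1-t)-1 by ring, A_eq, B_eq,
      show 2*(1-t)-1 = -(2*t-1) by ring, Int.natAbs_neg]]
  refine (Finset.sum_subset ?_ ?_).symm
  · intro j hj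
    simp only [Finset.mem_image, Finset.mem_Icc] at hj
    obtain ⟨t, ht, rfl⟩ := hj
    simp only [Finset.mem_Icc]
    omega
  · intro j hjS hj
    simp only [Finset.mem_image, Finset.mem_Icc] at hj
    simp only [Finset.mem_Icc] at hjS
    rcases Int.even_or_odd j with he | ho
    · exfalso
      obtain ⟨t, rfl⟩ := he
      exact hj ⟨t, by omega, by ring⟩
    · obtain ⟨t, rfl⟩ := ho
      rw [wtDim_even_odd d n _ (by omega), zero_mul]
lemma sum_Icc_bot {k d : ℕ} (h : k ≤ d) (f : ℕ → ℕ) :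
    ∑ s ∈ Finset.Icc k d, f s = f k + ∑ s ∈ Finset.Icc (k+1) d, f s := by
  rw [Finset.Icc_eq_cons_Ioc h, Finset.sum_cons, Finset.Icc_add_one_left_eq_Ioc]
lemma c_neg (d : ℕ) (n m : ℕ → ℕ) (t : ℤ) (ht : 1 ≤ t ∧ t ≤ d) :
    ((∑ s ∈ Finset.Icc (-t).natAbs d, n s : ℤ)
        - ∑ s ∈ Finset.Icc (((2*(-t)-1).natAbs + 1)/2) d, m s)
      = ((∑ s ∈ Finset.Icc t.natAbs d, n s : ℤ)
        - ∑ s ∈ Finset.Icc (((2*t-1).natAbs + 1)/2) d, m s) + m t.toNat := by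
  obtain ⟨h1, h2⟩ := ht
  have e1 : ((2*(-t)-1).natAbs + 1)/2 = t.toNat + 1 := by omega
  have e2 : ((2*t-1).natAbs + 1)/2 = t.toNat := by omega
  rw [Int.natAbs_neg, e1, e2, sum_Icc_bot (k := t.toNat) (d := d) (by omega) m]
  push_cast
  ring

/-- For `V = Σ_{i=0}^{d} n_i·Sym^{2i}(ℂ²)` and `W = Σ_{i=1}^{d} m_i·Sym^{2i-1}(ℂ²)`,
`2·[dim(V⊗V)[0] + dim(W⊗W)[0] − 2·dim(V⊗W)[1]] ≥ m_1² + ⋯ + m_d²`. -/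
theorem lower_bound_m_squares (d : ℕ) (n m : ℕ → ℕ) :
    (∑ i ∈ Finset.Icc 1 d, (m i : ℤ) ^ 2) ≤
      2 * ((tensorWtDim (evenRep d n) (evenRep d n) 0 : ℤ)
        + tensorWtDim (oddRep d m) (oddRep d m) 0
        - 2 * tensorWtDim (evenRep d n) (oddRep d m) 1) := by
  rw [tensor_even_even, tensor_odd_odd, tensor_even_odd]
  have hsub : Finset.Icc (-(d:ℤ)) (d:ℤ) ⊆ Finset.Icc (-(d:ℤ)) ((d:ℤ)+1) := by
    intro t ht; simp only [Finset.mem_Icc] at *; omega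
  have haa : ∀ t ∈ Finset.Icc (-(d:ℤ)) ((d:ℤ)+1), t ∉ Finset.Icc (-(d:ℤ)) (d:ℤ) →
      (∑ s ∈ Finset.Icc t.natAbs d, n s) = 0 := by
    intro t htT ht
    simp only [Finset.mem_Icc] at htT ht
    rw [Finset.Icc_eq_empty (by omega), Finset.sum_empty]
  have h1 : ∑ t ∈ Finset.Icc (-(d:ℤ)) (d:ℤ), (∑ s ∈ Finset.Icc t.natAbs d, n s)^2
      = ∑ t ∈ Finset.Icc (-(d:ℤ)) ((d:ℤ)+1), (∑ s ∈ Finset.Icc t.natAbs d, n s)^2 :=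
    Finset.sum_subset hsub (fun t h h' => by rw [haa t h h']; ring)
  have h2 : ∑ t ∈ Finset.Icc (-(d:ℤ)) (d:ℤ),
        (∑ s ∈ Finset.Icc t.natAbs d, n s) * (∑ s ∈ Finset.Icc (((2*t-1).natAbs + 1)/2) d, m s)
      = ∑ t ∈ Finset.Icc (-(d:ℤ)) ((d:ℤ)+1),
        (∑ s ∈ Finset.Icc t.natAbs d, n s) * (∑ s ∈ Finset.Icc (((2*t-1).natAbs + 1)/2) d, m s) :=
    Finset.sum_subset hsub (fun t h h' => by rw [haa t h h', zero_mul])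
  rw [h1, h2]
  push_cast
  have e1 : ∑ t ∈ Finset.Icc (-(d:ℤ)) ((d:ℤ)+1),
        ((∑ s ∈ Finset.Icc t.natAbs d, (n s:ℤ))
          - ∑ s ∈ Finset.Icc (((2*t-1).natAbs + 1)/2) d, (m s:ℤ))^2
      = (∑ t ∈ Finset.Icc (-(d:ℤ)) ((d:ℤ)+1), (∑ s ∈ Finset.Icc t.natAbs d, (n s:ℤ))^2)
        + (∑ t ∈ Finset.Icc (-(d:ℤ)) ((d:ℤ)+1),
            (∑ s ∈ Finset.Icc (((2*t-1).natAbs + 1)/2) d, (m s:ℤ))^2)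
        - 2 * ∑ t ∈ Finset.Icc (-(d:ℤ)) ((d:ℤ)+1),
            (∑ s ∈ Finset.Icc t.natAbs d, (n s:ℤ))
              * ∑ s ∈ Finset.Icc (((2*t-1).natAbs + 1)/2) d, (m s:ℤ) := by
    rw [Finset.mul_sum, ← Finset.sum_add_distrib, ← Finset.sum_sub_distrib]
    exact Finset.sum_congr rfl (fun t _ => by ring)
  rw [← e1]
  have reindex : ∑ i ∈ Finset.Icc 1 d, ((m i : ℤ))^2
      = ∑ t ∈ Finset.Icc (1:ℤ) (d:ℤ), ((m t.toNat : ℤ))^2 := by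
    rw [show Finset.Icc (1:ℤ) (d:ℤ) = (Finset.Icc 1 d).image (fun i : ℕ => (i:ℤ)) by
      ext a
      simp only [Finset.mem_Icc, Finset.mem_image]
      constructor
      · intro h; exact ⟨a.toNat, by omega, by omega⟩
      · rintro ⟨i, hi, rfl⟩; omega]
    rw [Finset.sum_image (by intro a _ b _ h; beta_reduce at h; omega)]
    apply Finset.sum_congr rfl
    intro i _
    simp
  rw [reindex]
  have key : ∀ t ∈ Finset.Icc (1:ℤ) (d:ℤ),
      ((m t.toNat : ℤ))^2 ≤
        2*((∑ s ∈ Finset.Icc t.natAbs d, (n s:ℤ))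
            - ∑ s ∈ Finset.Icc (((2*t-1).natAbs + 1)/2) d, (m s:ℤ))^2
        + 2*((∑ s ∈ Finset.Icc (-t).natAbs d, (n s:ℤ))
            - ∑ s ∈ Finset.Icc (((2*(-t)-1).natAbs + 1)/2) d, (m s:ℤ))^2 := by
    intro t ht
    simp only [Finset.mem_Icc] at ht
    have hc := c_neg d n m t ht
    push_cast at hc
    rw [hc]
    nlinarith [sq_nonneg (2*((∑ s ∈ Finset.Icc t.natAbs d, (n s:ℤ))
      - ∑ s ∈ Finset.Icc (((2*t-1).natAbs + 1)/2) d, (m s:ℤ)) + (m t.toNat : ℤ))]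
  calc ∑ t ∈ Finset.Icc (1:ℤ) (d:ℤ), ((m t.toNat : ℤ))^2
      ≤ ∑ t ∈ Finset.Icc (1:ℤ) (d:ℤ),
          (2*((∑ s ∈ Finset.Icc t.natAbs d, (n s:ℤ))
              - ∑ s ∈ Finset.Icc (((2*t-1).natAbs + 1)/2) d, (m s:ℤ))^2
          + 2*((∑ s ∈ Finset.Icc (-t).natAbs d, (n s:ℤ))
              - ∑ s ∈ Finset.Icc (((2*(-t)-1).natAbs + 1)/2) d, (m s:ℤ))^2) :=
        Finset.sum_le_sum key
    _ = 2 * ((∑ t ∈ Finset.Icc (1:ℤ) (d:ℤ),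
            ((∑ s ∈ Finset.Icc t.natAbs d, (n s:ℤ))
              - ∑ s ∈ Finset.Icc (((2*t-1).natAbs + 1)/2) d, (m s:ℤ))^2)
          + ∑ t ∈ (Finset.Icc (1:ℤ) (d:ℤ)).image (fun t => -t),
            ((∑ s ∈ Finset.Icc t.natAbs d, (n s:ℤ))
              - ∑ s ∈ Finset.Icc (((2*t-1).natAbs + 1)/2) d, (m s:ℤ))^2) := by
        rw [Finset.sum_image (by intro a _ b _ h; beta_reduce at h; omega)]
        rw [mul_add, Finset.mul_sum, Finset.mul_sum, ← Finset.sum_add_distrib]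
    _ = 2 * ∑ t ∈ (Finset.Icc (1:ℤ) (d:ℤ)) ∪ (Finset.Icc (1:ℤ) (d:ℤ)).image (fun t => -t),
          ((∑ s ∈ Finset.Icc t.natAbs d, (n s:ℤ))
            - ∑ s ∈ Finset.Icc (((2*t-1).natAbs + 1)/2) d, (m s:ℤ))^2 := by
        rw [Finset.sum_union (by
          rw [Finset.disjoint_left]
          intro a ha hb
          simp only [Finset.mem_Icc, Finset.mem_image] at ha hb
          obtain ⟨b, hb1, hb2⟩ := hb
          omega)]
    _ ≤ 2 * ∑ t ∈ Finset.Icc (-(d:ℤ)) ((d:ℤ)+1),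
          ((∑ s ∈ Finset.Icc t.natAbs d, (n s:ℤ))
            - ∑ s ∈ Finset.Icc (((2*t-1).natAbs + 1)/2) d, (m s:ℤ))^2 := by
        have hsub2 : (Finset.Icc (1:ℤ) (d:ℤ)) ∪ (Finset.Icc (1:ℤ) (d:ℤ)).image (fun t => -t)
            ⊆ Finset.Icc (-(d:ℤ)) ((d:ℤ)+1) := by
          intro a ha
          simp only [Finset.mem_union, Finset.mem_Icc, Finset.mem_image] at ha ⊢
          rcases ha with h | ⟨b, hb, hba⟩ <;> omega
        have := Finset.sum_le_sum_of_subset_of_nonneg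
          (f := fun t : ℤ => ((∑ s ∈ Finset.Icc t.natAbs d, (n s:ℤ))
            - ∑ s ∈ Finset.Icc (((2*t-1).natAbs + 1)/2) d, (m s:ℤ))^2)
          hsub2 (fun t _ _ => sq_nonneg _)
        linarith
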